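/- For every round m, M_m ⊆ L_C: every link MARKED by the distributed greedy algorithm at any round belongs to the centralized greedy schedule. -/

import Mathlib

open Classical

/-- Link distance `d(l_u,l_v)`: minimum graph distance between endpoints of the two links. -/
noncomputable def linkDist {V : Type*} (G : SimpleGraph V) (lu lv : V × V) : ℕ :=
  min (min (G.dist lu.1 lv.1) (G.dist lu.1 lv.2))
      (min (G.dist lu.2 lv.1) (G.dist lu.2 lv.2))

/-- A wireless network: a connected simple graph `G` on the node set `V`, a finite set `L`
of directed links between adjacent nodes, an interference parameter `K ≥ 1`, and
pairwise distinct link prices `lam`. -/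
structure Net (V : Type*) where
  G : SimpleGraph V
  conn : G.Connected
  L : Set (V × V)
  Lfin : L.Finite
  adj : ∀ l ∈ L, G.Adj l.1 l.2
  K : ℕ
  hK : 1 ≤ K
  lam : V × V → ℝ
  distinct : ∀ l ∈ L, ∀ l' ∈ L, l ≠ l' → lam l ≠ lam l'

/-- `W` is a `K`-valid matching: distinct links of `W` are at link distance `≥ K`. -/
def KValid {V : Type*} (N : Net V) (W : Set (V × V)) : Prop :=
  ∀ l ∈ W, ∀ l' ∈ W, l ≠ l' → N.K ≤ linkDist N.G l l'

/-- State of the distributed algorithm: the OPEN, CHECK, MARKED and CLOSED links. -/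
structure St (V : Type*) where
  O : Set (V × V)
  H : Set (V × V)
  M : Set (V × V)
  C : Set (V × V)

/-- The OPEN attached links of node `n` (OPEN links whose source is `n`). -/
def openAt {V : Type*} (s : St V) (n : V) : Set (V × V) :=
  {l ∈ s.O | l.1 = n}

/-- `a` selects, at every node `n` having an OPEN attached link, the highest-priced
OPEN attached link `a n` of `n`. -/
def IsSelector {V : Type*} (N : Net V) (s : St V) (a : V → V × V) : Prop :=
  ∀ n, (openAt s n).Nonempty →
    a n ∈ openAt s n ∧ ∀ l ∈ openAt s n, N.lam l ≤ N.lam (a n)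

/-- `R(n)`: the highest-priced OPEN attached links `a n'` of the other nodes `n'` within
`K+1` hops of `n` that have an OPEN attached link. -/
def Rset {V : Type*} (N : Net V) (s : St V) (a : V → V × V) (n : V) : Set (V × V) :=
  {l' | ∃ n', n' ≠ n ∧ N.G.dist n n' ≤ N.K + 1 ∧ (openAt s n').Nonempty ∧ l' = a n'}

/-- Node `n` marks its highest-priced OPEN attached link `a n`: `n` has an OPEN attached
link, and either `R(n) = ∅` or `a n` beats every received price (this disjunction is
expressed by the universally quantified inequality). -/
def MarkCond {V : Type*} (N : Net V) (s : St V) (a : V → V × V) (n : V) : Prop :=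
  (openAt s n).Nonempty ∧ ∀ l' ∈ Rset N s a n, N.lam l' < N.lam (a n)

/-- One round of the distributed greedy algorithm, transforming state `s` into `s'`.
Phase 1: each node `n` with an OPEN attached link either marks `a n` and closes its other
OPEN attached links (when `MarkCond` holds), or moves to CHECK each OPEN attached link
that is interfered with by a strictly higher-priced received link, the rest staying OPEN.
Phase 2: the marked links are added to the MARKED set; every CHECK link interfering with
some MARKED link is closed; then at each node the highest-priced attached link still in
CHECK (if any) becomes OPEN again. -/
def Step {V : Type*} (N : Net V) (s s' : St V) : Prop :=
  ∃ a : V → V × V, IsSelector N s a ∧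
    (let newMarked : Set (V × V) := {l | ∃ n, MarkCond N s a n ∧ l = a n}
     let closed1 : Set (V × V) := {l ∈ s.O | MarkCond N s a l.1 ∧ l ≠ a l.1}
     let newCheck : Set (V × V) :=
       {l ∈ s.O | ¬ MarkCond N s a l.1 ∧
         ∃ l' ∈ Rset N s a l.1, N.lam l < N.lam l' ∧ linkDist N.G l l' < N.K}
     let M' : Set (V × V) := s.M ∪ newMarked
     let pool : Set (V × V) := s.H ∪ newCheck
     let closed2 : Set (V × V) := {l ∈ pool | ∃ j ∈ M', linkDist N.G l j < N.K}
     let rem : Set (V × V) := pool \ closed2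
     let reopened : Set (V × V) := {l ∈ rem | ∀ l' ∈ rem, l'.1 = l.1 → N.lam l' ≤ N.lam l}
     s'.O = (s.O \ (newMarked ∪ closed1 ∪ newCheck)) ∪ reopened ∧
     s'.H = rem \ reopened ∧
     s'.M = M' ∧
     s'.C = s.C ∪ closed1 ∪ closed2)

/-- A trajectory of the distributed greedy algorithm, rounds indexed from `1`:
initially every link of `L` is OPEN, and each round `m ≥ 1` performs one `Step`. -/
def IsTrajectory {V : Type*} (N : Net V) (O H M C : ℕ → Set (V × V)) : Prop :=
  O 1 = N.L ∧ H 1 = ∅ ∧ M 1 = ∅ ∧ C 1 = ∅ ∧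
    ∀ m, 1 ≤ m → Step N ⟨O m, H m, M m, C m⟩ ⟨O (m+1), H (m+1), M (m+1), C (m+1)⟩

/-- Process a list of links in order, starting from `W`, adding a link whenever the
result is still a `K`-valid matching.  Applied to the listing of `L` in strictly
decreasing order of price, this computes the centralized greedy schedule `L_C`. -/
noncomputable def greedyList {V : Type*} (N : Net V) :
    List (V × V) → Set (V × V) → Set (V × V)
  | [], W => W
  | l :: ls, W => greedyList N ls (if KValid N (insert l W) then insert l W else W)

section Aux

variable {V : Type*}

lemma linkDist_comm (G : SimpleGraph V) (l j : V × V) : linkDist G l j = linkDist G j l := by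
  have h1 : G.dist l.1 j.1 = G.dist j.1 l.1 := G.dist_comm
  have h2 : G.dist l.1 j.2 = G.dist j.2 l.1 := G.dist_comm
  have h3 : G.dist l.2 j.1 = G.dist j.1 l.2 := G.dist_comm
  have h4 : G.dist l.2 j.2 = G.dist j.2 l.2 := G.dist_comm
  unfold linkDist
  omega

/-- If two links of `L` interfere, their sources are within `K+1` hops. -/
lemma sources_close (N : Net V) {l j : V × V} (hl : l ∈ N.L) (hj : j ∈ N.L)
    (h : linkDist N.G l j < N.K) : N.G.dist l.1 j.1 ≤ N.K + 1 := by
  have hal : N.G.dist l.1 l.2 = 1 := SimpleGraph.dist_eq_one_iff_adj.2 (N.adj l hl)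
  have haj : N.G.dist j.1 j.2 = 1 := SimpleGraph.dist_eq_one_iff_adj.2 (N.adj j hj)
  have haj' : N.G.dist j.2 j.1 = 1 := by rw [show N.G.dist j.2 j.1 = N.G.dist j.1 j.2 from N.G.dist_comm]; exact haj
  have t1 : N.G.dist l.1 j.1 ≤ N.G.dist l.1 j.2 + N.G.dist j.2 j.1 := N.conn.dist_triangle
  have t2 : N.G.dist l.1 j.1 ≤ N.G.dist l.1 l.2 + N.G.dist l.2 j.1 := N.conn.dist_triangle
  have t3 : N.G.dist l.1 j.2 ≤ N.G.dist l.1 l.2 + N.G.dist l.2 j.2 := N.conn.dist_triangle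
  unfold linkDist at h
  omega

lemma greedyList_mono (N : Net V) :
    ∀ (lst : List (V × V)) (W : Set (V × V)), W ⊆ greedyList N lst W
  | [], _ => subset_rfl
  | l :: ls, W => by
      rw [greedyList]
      split
      · exact (Set.subset_insert _ _).trans (greedyList_mono N ls _)
      · exact greedyList_mono N ls _

lemma greedyList_valid (N : Net V) :
    ∀ (lst : List (V × V)) (W : Set (V × V)), KValid N W → KValid N (greedyList N lst W)
  | [], _, hW => hW
  | l :: ls, W, hW => by
      rw [greedyList]
      split
      · exact greedyList_valid N ls _ (by assumption)
      · exact greedyList_valid N ls _ hW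

lemma greedyList_subset (N : Net V) :
    ∀ (lst : List (V × V)) (W : Set (V × V)), greedyList N lst W ⊆ W ∪ {x | x ∈ lst}
  | [], W => by simp [greedyList]
  | l :: ls, W => by
      rw [greedyList]
      refine (greedyList_subset N ls _).trans ?_
      split
      · intro x hx
        rcases hx with hx | hx
        · rcases hx with rfl | hx
          · exact Or.inr (by simp)
          · exact Or.inl hx
        · exact Or.inr (by simp only [Set.mem_setOf_eq, List.mem_cons]; exact Or.inr hx)
      · intro x hx
        rcases hx with hx | hx
        · exact Or.inl hx
        · exact Or.inr (by simp only [Set.mem_setOf_eq, List.mem_cons]; exact Or.inr hx)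

lemma greedyList_accept (N : Net V) (l : V × V) :
    ∀ (lst : List (V × V)) (W : Set (V × V)),
      lst.Pairwise (fun a b => N.lam b < N.lam a) → KValid N W →
      (∀ w ∈ W, N.lam l < N.lam w) → l ∈ lst →
      (∀ l' ∈ greedyList N lst W, N.lam l < N.lam l' → N.K ≤ linkDist N.G l l') →
      l ∈ greedyList N lst W
  | [], W, _, _, _, hmem, _ => by cases hmem
  | h :: t, W, hsort, hW, hWlt, hmem, hint => by
      by_cases hhl : h = l
      · subst hhl
        have hWF : W ⊆ greedyList N (h :: t) W := by
          rw [greedyList]; split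
          · exact (Set.subset_insert _ _).trans (greedyList_mono N t _)
          · exact greedyList_mono N t _
        have hval : KValid N (insert h W) := by
          intro x hx y hy hxy
          rcases hx with rfl | hx
          · rcases hy with rfl | hy
            · exact absurd rfl hxy
            · exact hint y (hWF hy) (hWlt y hy)
          · rcases hy with rfl | hy
            · rw [linkDist_comm]; exact hint x (hWF hx) (hWlt x hx)
            · exact hW x hx y hy hxy
        rw [greedyList, if_pos hval]
        exact greedyList_mono N t _ (Set.mem_insert _ _)
      · have hmem' : l ∈ t := by
          rcases List.mem_cons.mp hmem with h1 | h1
          · exact absurd h1.symm hhl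
          · exact h1
        have hlt_h : N.lam l < N.lam h := (List.pairwise_cons.mp hsort).1 l hmem'
        have hsort' := (List.pairwise_cons.mp hsort).2
        rw [greedyList] at hint ⊢
        split at hint <;> rename_i hcond
        · rw [if_pos hcond]
          exact greedyList_accept N l t _ hsort' hcond
            (by intro w hw; rcases hw with rfl | hw; exacts [hlt_h, hWlt w hw]) hmem' hint
        · rw [if_neg hcond]
          exact greedyList_accept N l t _ hsort' hW hWlt hmem' hint

/-- The invariant carried through the rounds of the distributed algorithm. -/
structure GInv (N : Net V) (LC : Set (V × V)) (s : St V) : Prop where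
  sub : s.O ∪ s.H ∪ s.M ⊆ N.L
  mark : s.M ⊆ LC
  lc : LC ⊆ s.O ∪ s.H ∪ s.M
  noint : ∀ l ∈ s.O ∪ s.H, ∀ j ∈ s.M, N.K ≤ linkDist N.G l j
  hdom : ∀ l ∈ s.H, ∃ l' ∈ s.O, l'.1 = l.1 ∧ N.lam l < N.lam l'

theorem step_inv (N : Net V) (LC : Set (V × V))
    (hLCsub : LC ⊆ N.L) (hLCval : KValid N LC)
    (hacc : ∀ l ∈ N.L, (∀ l' ∈ LC, N.lam l < N.lam l' → N.K ≤ linkDist N.G l l') → l ∈ LC)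
    (s s' : St V) (hst : Step N s s') (hv : GInv N LC s) : GInv N LC s' := by
  classical
  obtain ⟨a, hsel, hO', hH', hM', hC'⟩ := hst
  set NM : Set (V × V) := {l | ∃ n, MarkCond N s a n ∧ l = a n} with hNMd
  set CL1 : Set (V × V) := {l ∈ s.O | MarkCond N s a l.1 ∧ l ≠ a l.1} with hCL1d
  set NC : Set (V × V) := {l ∈ s.O | ¬ MarkCond N s a l.1 ∧
      ∃ l' ∈ Rset N s a l.1, N.lam l < N.lam l' ∧ linkDist N.G l l' < N.K} with hNCd
  set M2 : Set (V × V) := s.M ∪ NM with hM2d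
  set pool : Set (V × V) := s.H ∪ NC with hpoold
  set CL2 : Set (V × V) := {l ∈ pool | ∃ j ∈ M2, linkDist N.G l j < N.K} with hCL2d
  set rem : Set (V × V) := pool \ CL2 with hremd
  set reop : Set (V × V) := {l ∈ rem | ∀ l' ∈ rem, l'.1 = l.1 → N.lam l' ≤ N.lam l} with hreopd
  have hOL : s.O ⊆ N.L := fun l hl => hv.sub (Or.inl (Or.inl hl))
  have hHL : s.H ⊆ N.L := fun l hl => hv.sub (Or.inl (Or.inr hl))
  have hNCO : NC ⊆ s.O := fun l hl => hl.1
  have hNMO : NM ⊆ s.O := by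
    rintro l ⟨n, hmc, rfl⟩
    exact ((hsel n hmc.1).1).1
  have hpoolL : pool ⊆ N.L := by
    intro l hl
    rcases hl with hl | hl
    · exact hHL hl
    · exact hOL (hNCO hl)
  have hremL : rem ⊆ N.L := fun l hl => hpoolL hl.1
  have hreoprem : reop ⊆ rem := fun l hl => hl.1
  -- every link marked in this round belongs to LC
  have hmark : ∀ n, MarkCond N s a n → a n ∈ LC := by
    intro n hmc
    obtain ⟨hne, hbeat⟩ := hmc
    obtain ⟨hanO, hantop⟩ := hsel n hne
    obtain ⟨hanO1, hanO2⟩ := hanO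
    refine hacc _ (hOL hanO1) ?_
    intro l' hl'LC hlt
    by_contra hdk
    push_neg at hdk
    have hl'L : l' ∈ N.L := hLCsub hl'LC
    rcases hv.lc hl'LC with hOH | hMm
    · obtain ⟨w, hwO, hw1, hwge⟩ : ∃ w ∈ s.O, w.1 = l'.1 ∧ N.lam l' ≤ N.lam w := by
        rcases hOH with hO | hH
        · exact ⟨l', hO, rfl, le_refl _⟩
        · obtain ⟨w, hwO, hw1, hlt'⟩ := hv.hdom l' hH
          exact ⟨w, hwO, hw1, le_of_lt hlt'⟩
      have hopenne : (openAt s l'.1).Nonempty := ⟨w, hwO, hw1⟩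
      obtain ⟨_, htop'⟩ := hsel l'.1 hopenne
      have hwle : N.lam w ≤ N.lam (a l'.1) := htop' w ⟨hwO, hw1⟩
      by_cases hnn : l'.1 = n
      · have := hantop w ⟨hwO, by rw [hw1, hnn]⟩
        linarith
      · have hdist : N.G.dist n l'.1 ≤ N.K + 1 := by
          have h1 := sources_close N (hOL hanO1) hl'L hdk
          rwa [hanO2] at h1
        have hR : a l'.1 ∈ Rset N s a n := ⟨l'.1, hnn, hdist, hopenne, rfl⟩
        have := hbeat _ hR
        linarith
    · exact absurd hdk (not_lt.mpr (hv.noint (a n) (Or.inl hanO1) l' hMm))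
  have hM2LC : M2 ⊆ LC := by
    intro l hl
    rcases hl with hl | ⟨n, hmc, rfl⟩
    · exact hv.mark hl
    · exact hmark n hmc
  -- surviving-OPEN links don't interfere with newly marked links
  have hOsurv : ∀ l, l ∈ s.O \ (NM ∪ CL1 ∪ NC) → ∀ j ∈ M2, N.K ≤ linkDist N.G l j := by
    rintro l ⟨hlO, hlnot⟩ j hj
    have hnotNM : l ∉ NM := fun h => hlnot (Or.inl (Or.inl h))
    have hnotCL1 : l ∉ CL1 := fun h => hlnot (Or.inl (Or.inr h))
    have hnotNC : l ∉ NC := fun h => hlnot (Or.inr h)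
    rcases hj with hj | ⟨n, hmc, rfl⟩
    · exact hv.noint l (Or.inl hlO) j hj
    · by_contra hdk
      push_neg at hdk
      have hMCn := hmc
      obtain ⟨hne_n, hbeat_n⟩ := hmc
      obtain ⟨⟨hanO, han1⟩, hantop⟩ := hsel n hne_n
      have hnMC : ¬ MarkCond N s a l.1 := by
        intro hmcl
        by_cases hla : l = a l.1
        · exact hnotNM ⟨l.1, hmcl, hla⟩
        · exact hnotCL1 ⟨hlO, hmcl, hla⟩
      have hnl1 : n ≠ l.1 := by
        intro h
        rw [h] at hMCn
        exact hnMC hMCn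
      have hjL : a n ∈ N.L := hOL hanO
      have hlL : l ∈ N.L := hOL hlO
      have hlj : l ≠ a n := by
        intro h
        exact hnl1 (by rw [← han1, ← h])
      have hdsources : N.G.dist l.1 n ≤ N.K + 1 := by
        have h1 := sources_close N hlL hjL hdk
        rwa [han1] at h1
      have hRl : a n ∈ Rset N s a l.1 := ⟨n, hnl1, hdsources, hne_n, rfl⟩
      rcases lt_trichotomy (N.lam l) (N.lam (a n)) with hc | hc | hc
      · exact hnotNC ⟨hlO, hnMC, a n, hRl, hc, hdk⟩
      · exact (N.distinct l hlL (a n) hjL hlj) hc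
      · have hlopen : l ∈ openAt s l.1 := ⟨hlO, rfl⟩
        have hne_l1 : (openAt s l.1).Nonempty := ⟨l, hlopen⟩
        obtain ⟨_, htopl⟩ := hsel l.1 hne_l1
        have h1 : N.lam l ≤ N.lam (a l.1) := htopl l hlopen
        have hdist' : N.G.dist n l.1 ≤ N.K + 1 := by
          have hcomm : N.G.dist n l.1 = N.G.dist l.1 n := N.G.dist_comm
          rw [hcomm]; exact hdsources
        have hRn : a l.1 ∈ Rset N s a n := ⟨l.1, fun h => hnl1 h.symm, hdist', hne_l1, rfl⟩
        have := hbeat_n _ hRn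
        linarith
  have hremnoint : ∀ l ∈ rem, ∀ j ∈ M2, N.K ≤ linkDist N.G l j := by
    rintro l ⟨hlpool, hlnot⟩ j hj
    by_contra hdk
    push_neg at hdk
    exact hlnot ⟨hlpool, j, hj, hdk⟩
  have hpoolLC : ∀ l ∈ pool, l ∈ LC → l ∈ reop ∪ (rem \ reop) ∪ M2 := by
    intro l hlpool hlLC
    by_cases h2 : l ∈ CL2
    · obtain ⟨_, j, hjM2, hdj⟩ := h2
      by_cases hlj : l = j
      · exact Or.inr (hlj ▸ hjM2)
      · exact absurd (hLCval l hlLC j (hM2LC hjM2) hlj) (not_le.mpr hdj)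
    · have hlrem : l ∈ rem := ⟨hlpool, h2⟩
      by_cases hre : l ∈ reop
      · exact Or.inl (Or.inl hre)
      · exact Or.inl (Or.inr ⟨hlrem, hre⟩)
  constructor
  · -- sub
    rw [hO', hH', hM']
    intro l hl
    rcases hl with (hl | hl) | hl
    · rcases hl with ⟨hl, _⟩ | hl
      · exact hOL hl
      · exact hremL (hreoprem hl)
    · exact hremL hl.1
    · rcases hl with hl | hl
      · exact hv.sub (Or.inr hl)
      · exact hOL (hNMO hl)
  · -- mark
    rw [hM']; exact hM2LC
  · -- lc
    rw [hO', hH', hM']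
    intro l hlLC
    have hfrompool : l ∈ pool → l ∈ (s.O \ (NM ∪ CL1 ∪ NC) ∪ reop) ∪ rem \ reop ∪ M2 := by
      intro hp
      rcases hpoolLC l hp hlLC with (h | h) | h
      · exact Or.inl (Or.inl (Or.inr h))
      · exact Or.inl (Or.inr h)
      · exact Or.inr h
    rcases hv.lc hlLC with (hO | hH) | hM
    · by_cases hnm : l ∈ NM
      · exact Or.inr (Or.inr hnm)
      · by_cases hmcl : MarkCond N s a l.1
        · -- l would be closed1: contradiction with validity of LC
          exfalso
          by_cases hla : l = a l.1
          · exact hnm ⟨l.1, hmcl, hla⟩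
          · have hopen : l ∈ openAt s l.1 := ⟨hO, rfl⟩
            obtain ⟨⟨hb1, hb2⟩, _⟩ := hsel l.1 ⟨l, hopen⟩
            have hd1 : linkDist N.G l (a l.1) ≤ N.G.dist l.1 (a l.1).1 := by
              unfold linkDist
              exact le_trans (min_le_left _ _) (min_le_left _ _)
            have hd0 : linkDist N.G l (a l.1) < N.K := by
              rw [hb2, SimpleGraph.dist_self] at hd1
              have := N.hK
              omega
            have haLC : a l.1 ∈ LC := hmark l.1 hmcl
            exact absurd (hLCval l hlLC (a l.1) haLC hla) (not_le.mpr hd0)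
        · by_cases hnc : l ∈ NC
          · exact hfrompool (Or.inr hnc)
          · refine Or.inl (Or.inl (Or.inl ⟨hO, ?_⟩))
            rintro ((h | h) | h)
            · exact hnm h
            · exact hmcl h.2.1
            · exact hnc h
    · exact hfrompool (Or.inl hH)
    · exact Or.inr (Or.inl hM)
  · -- noint
    rw [hO', hH', hM']
    intro l hl j hj
    rcases hl with hl | hl
    · rcases hl with hl | hl
      · exact hOsurv l hl j hj
      · exact hremnoint l (hreoprem hl) j hj
    · exact hremnoint l hl.1 j hj
  · -- hdom
    rw [hO', hH']
    intro l hl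
    obtain ⟨hlrem, hlnre⟩ := hl
    have hTsub : {x ∈ rem | x.1 = l.1} ⊆ N.L := fun x hx => hremL hx.1
    have hTfin : {x ∈ rem | x.1 = l.1}.Finite := N.Lfin.subset hTsub
    have hTne : {x ∈ rem | x.1 = l.1}.Nonempty := ⟨l, hlrem, rfl⟩
    obtain ⟨w, hwT, hwmax⟩ := Set.Finite.exists_maximalFor N.lam _ hTfin hTne
    have hwtop : ∀ x ∈ {x ∈ rem | x.1 = l.1}, N.lam x ≤ N.lam w := by
      intro x hx
      rcases le_or_gt (N.lam x) (N.lam w) with h | h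
      · exact h
      · exact hwmax hx (le_of_lt h)
    have hwre : w ∈ reop := by
      refine ⟨hwT.1, ?_⟩
      intro l' hl' h1
      exact hwtop l' ⟨hl', by rw [h1, hwT.2]⟩
    refine ⟨w, Or.inr hwre, hwT.2, ?_⟩
    have hle : N.lam l ≤ N.lam w := hwtop l ⟨hlrem, rfl⟩
    have hne : l ≠ w := fun h => hlnre (h ▸ hwre)
    exact lt_of_le_of_ne hle (N.distinct l (hremL hlrem) w (hremL hwT.1) hne)

end Aux

/-- every link MARKED by the distributed greedy algorithm at any round
belongs to the centralized greedy schedule `L_C = greedyList N lst ∅`, where `lst`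
lists the links of `L` in strictly decreasing order of price. -/
theorem stmt11_marked_subset_centralized {V : Type*} [Fintype V] (N : Net V)
    (O H M C : ℕ → Set (V × V)) (htraj : IsTrajectory N O H M C)
    (lst : List (V × V)) (hmem : ∀ l, l ∈ lst ↔ l ∈ N.L)
    (hsort : lst.Pairwise (fun a b => N.lam b < N.lam a)) :
    ∀ m, 1 ≤ m → M m ⊆ greedyList N lst ∅ := by
  classical
  set LC := greedyList N lst ∅ with hLCdef
  have hval0 : KValid N (∅ : Set (V × V)) := by
    intro x hx; exact absurd hx (Set.notMem_empty x)
  have hLCsub : LC ⊆ N.L := by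
    intro x hx
    rcases greedyList_subset N lst ∅ hx with hx | hx
    · exact absurd hx (Set.notMem_empty x)
    · exact (hmem x).1 hx
  have hLCval : KValid N LC := greedyList_valid N lst ∅ hval0
  have hacc : ∀ l ∈ N.L, (∀ l' ∈ LC, N.lam l < N.lam l' → N.K ≤ linkDist N.G l l') → l ∈ LC := by
    intro l hl h
    exact greedyList_accept N l lst ∅ hsort hval0
      (by intro w hw; exact absurd hw (Set.notMem_empty w)) ((hmem l).2 hl) h
  obtain ⟨hO1, hH1, hM1, hC1, hstep⟩ := htraj
  have hinv : ∀ m, 1 ≤ m → GInv N LC ⟨O m, H m, M m, C m⟩ := by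
    intro m hm
    induction m, hm using Nat.le_induction with
    | base =>
      constructor
      · show O 1 ∪ H 1 ∪ M 1 ⊆ N.L
        rw [hO1, hH1, hM1]; simp
      · show M 1 ⊆ LC
        rw [hM1]; exact Set.empty_subset _
      · show LC ⊆ O 1 ∪ H 1 ∪ M 1
        intro x hx; rw [hO1]; exact Or.inl (Or.inl (hLCsub hx))
      · show ∀ l ∈ O 1 ∪ H 1, ∀ j ∈ M 1, N.K ≤ linkDist N.G l j
        intro l _ j hj; rw [hM1] at hj; exact absurd hj (Set.notMem_empty j)
      · show ∀ l ∈ H 1, ∃ l' ∈ O 1, l'.1 = l.1 ∧ N.lam l < N.lam l'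
        intro l hl; rw [hH1] at hl; exact absurd hl (Set.notMem_empty l)
    | succ m hm ih => exact step_inv N LC hLCsub hLCval hacc _ _ (hstep m hm) ih
  intro m hm
  exact (hinv m hm).mark
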